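/- Let N ≥ 2, let K satisfy the kernel condition, and let ψ : ℝ^N → ℝ^N be a continuously differentiable vector field with compact support in the closed unit ball and ∫ ψ = 0; for R > 0 set ψ_R(z) = R^{-N} ψ(z/R). There exists a constant C, depending only on N, C₀ and ψ, such that for every R > 0 and every w ∈ ℝ^N with |w| > 2R one has |∫_{ℝ^N} ∇K(ξ − w)·ψ_R(ξ) dξ| ≤ C · R · |w|^{-(N+1)}. -/

import Mathlib

open MeasureTheory Metric Filter
open scoped ENNReal Topology NNReal

open scoped RealInnerProductSpace

/-- The kernel condition: `K` is twice continuously differentiable off the origin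
and `|∇^j K(x)| ≤ C₀ |x|^{-(N-1+j)}` for `j = 0, 1, 2` and all `x ≠ 0`. -/
def KernelCond (N : ℕ) (C₀ : ℝ) (K : EuclideanSpace ℝ (Fin N) → ℝ) : Prop :=
  ContDiffOn ℝ 2 K {(0 : EuclideanSpace ℝ (Fin N))}ᶜ ∧
    ∀ j : ℕ, j ≤ 2 → ∀ x : EuclideanSpace ℝ (Fin N), x ≠ 0 →
      ‖iteratedFDeriv ℝ j K x‖ ≤ C₀ * ‖x‖ ^ (-(N - 1 + j : ℝ))

lemma inner_sum_eq {N : ℕ} (a b : EuclideanSpace ℝ (Fin N)) :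
    (∑ i, a i * b i) = ⟪a, b⟫ := by
  rw [PiLp.inner_apply]
  simp [RCLike.inner_apply]
  exact Finset.sum_congr rfl fun i _ => mul_comm _ _

lemma kc_C₀_nonneg {N : ℕ} (hN : 2 ≤ N) {C₀ : ℝ} {K : EuclideanSpace ℝ (Fin N) → ℝ}
    (hK : KernelCond N C₀ K) : 0 ≤ C₀ := by
  have hNpos : 0 < N := by omega
  set x : EuclideanSpace ℝ (Fin N) := EuclideanSpace.single (⟨0, hNpos⟩ : Fin N) (1:ℝ)
  have hx1 : ‖x‖ = 1 := by simp [x, EuclideanSpace.norm_single]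
  have hx0 : x ≠ 0 := by intro h; rw [h, norm_zero] at hx1; norm_num at hx1
  have h := hK.2 0 (by norm_num) x hx0
  rw [hx1, Real.one_rpow] at h
  have := norm_nonneg (iteratedFDeriv ℝ 0 K x); linarith


lemma grad_diff_bound {N : ℕ} {C₀ : ℝ}
    {K : EuclideanSpace ℝ (Fin N) → ℝ} (hK : KernelCond N C₀ K) (hC₀ : 0 ≤ C₀)
    {R : ℝ} (hR : 0 < R) {w ξ : EuclideanSpace ℝ (Fin N)} (hw : 2 * R < ‖w‖)
    (hξ : ‖ξ‖ ≤ R) :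
    ‖gradient K (ξ - w) - gradient K (0 - w)‖ ≤
      C₀ * 2 ^ ((N : ℝ) + 1) * ‖w‖ ^ (-((N : ℝ) + 1)) * ‖ξ‖ := by
  have hw0 : 0 < ‖w‖ := lt_trans (by positivity) hw
  set M : ℝ := C₀ * 2 ^ ((N : ℝ) + 1) * ‖w‖ ^ (-((N : ℝ) + 1)) with hM
  set s : Set (EuclideanSpace ℝ (Fin N)) := ball (-w) (‖w‖ / 2) with hs_def
  have hs : Convex ℝ s := convex_ball _ _
  have hy_norm : ∀ y ∈ s, ‖w‖ / 2 ≤ ‖y‖ := by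
    intro y hy
    have h1 : ‖y - (-w)‖ < ‖w‖ / 2 := mem_ball_iff_norm.1 hy
    have h2 : ‖-w‖ - ‖y‖ ≤ ‖-w - y‖ := norm_sub_norm_le _ _
    rw [norm_neg] at h2
    have h3 : ‖-w - y‖ = ‖y - (-w)‖ := by
      rw [← norm_neg (-w - y)]; congr 1; abel
    linarith [h3 ▸ h2]
  have hy0 : ∀ y ∈ s, y ≠ 0 := by
    intro y hy h0
    have := hy_norm y hy
    rw [h0, norm_zero] at this
    linarith
  have hopen : IsOpen ({(0:EuclideanSpace ℝ (Fin N))}ᶜ) := isOpen_compl_singleton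
  have hd1 : ContDiffOn ℝ 1 (fderiv ℝ K) {(0:EuclideanSpace ℝ (Fin N))}ᶜ :=
    hK.1.fderiv_of_isOpen hopen (by norm_num : (1:WithTop ℕ∞) + 1 ≤ 2)
  have hdiff : ∀ y : EuclideanSpace ℝ (Fin N), y ≠ 0 → DifferentiableAt ℝ (fderiv ℝ K) y := fun y hy =>
    (hd1.differentiableOn one_ne_zero).differentiableAt (hopen.mem_nhds hy)
  set L : (EuclideanSpace ℝ (Fin N) →L[ℝ] ℝ) →L[ℝ] EuclideanSpace ℝ (Fin N) :=
    ((InnerProductSpace.toDual ℝ (EuclideanSpace ℝ (Fin N))).symm.toContinuousLinearEquiv :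
      (EuclideanSpace ℝ (Fin N) →L[ℝ] ℝ) ≃L[ℝ] EuclideanSpace ℝ (Fin N)).toContinuousLinearMap with hL
  have hLnorm : ∀ u : EuclideanSpace ℝ (Fin N) →L[ℝ] ℝ, ‖L u‖ = ‖u‖ := fun u => by
    simp [hL]
  have hgradeq : gradient K = fun y => L (fderiv ℝ K y) := by
    funext y
    simp [hL, gradient]
  have hder : ∀ y ∈ s, HasFDerivAt (gradient K) (L.comp (fderiv ℝ (fderiv ℝ K) y)) y := by
    intro y hy
    have h1 : HasFDerivAt (fderiv ℝ K) (fderiv ℝ (fderiv ℝ K) y) y :=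
      (hdiff y (hy0 y hy)).hasFDerivAt
    rw [hgradeq]
    exact L.hasFDerivAt.comp y h1
  have hDnorm : ∀ y ∈ s, ‖fderiv ℝ (gradient K) y‖ ≤ M := by
    intro y hy
    rw [(hder y hy).fderiv]
    have hb : ‖L.comp (fderiv ℝ (fderiv ℝ K) y)‖ ≤ ‖fderiv ℝ (fderiv ℝ K) y‖ := by
      refine ContinuousLinearMap.opNorm_le_bound _ (norm_nonneg (fderiv ℝ (fderiv ℝ K) y)) fun v => ?_
      rw [ContinuousLinearMap.comp_apply, hLnorm]
      exact (fderiv ℝ (fderiv ℝ K) y).le_opNorm v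
    have h2 : ‖fderiv ℝ (fderiv ℝ K) y‖ = ‖iteratedFDeriv ℝ 2 K y‖ := by
      have a : ‖iteratedFDeriv ℝ 0 (fderiv ℝ (fderiv ℝ K)) y‖ = ‖fderiv ℝ (fderiv ℝ K) y‖ :=
        norm_iteratedFDeriv_zero
      have b := norm_iteratedFDeriv_fderiv (𝕜 := ℝ) (f := fderiv ℝ K) (n := 0) (x := y)
      have c := norm_iteratedFDeriv_fderiv (𝕜 := ℝ) (f := K) (n := 1) (x := y)
      rw [← a, b, c]
    have h3 := hK.2 2 le_rfl y (hy0 y hy)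
    have hexp : (-(N - 1 + (2:ℕ) : ℝ)) = -((N:ℝ) + 1) := by push_cast; ring
    rw [hexp] at h3
    have h5 : ‖y‖ ^ (-((N:ℝ)+1)) ≤ (‖w‖/2) ^ (-((N:ℝ)+1)) :=
      Real.rpow_le_rpow_of_nonpos (by positivity) (hy_norm y hy)
        (neg_nonpos.2 (by positivity))
    have h6 : (‖w‖/2) ^ (-((N:ℝ)+1)) = 2 ^ ((N:ℝ)+1) * ‖w‖ ^ (-((N:ℝ)+1)) := by
      rw [Real.div_rpow (norm_nonneg w) (by norm_num : (0:ℝ) ≤ 2),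
        Real.rpow_neg (by norm_num : (0:ℝ) ≤ 2), div_eq_mul_inv, inv_inv, mul_comm]
    calc ‖L.comp (fderiv ℝ (fderiv ℝ K) y)‖ ≤ ‖iteratedFDeriv ℝ 2 K y‖ := h2 ▸ hb
      _ ≤ C₀ * ‖y‖ ^ (-((N:ℝ)+1)) := h3
      _ ≤ C₀ * (2 ^ ((N:ℝ)+1) * ‖w‖ ^ (-((N:ℝ)+1))) := by
          rw [← h6]; exact mul_le_mul_of_nonneg_left h5 hC₀
      _ = M := by rw [hM]; ring
  have hmem1 : (0:EuclideanSpace ℝ (Fin N)) - w ∈ s := by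
    rw [hs_def, mem_ball_iff_norm]
    have h0 : (0:EuclideanSpace ℝ (Fin N)) - w - (-w) = 0 := by abel
    rw [h0, norm_zero]
    positivity
  have hmem2 : ξ - w ∈ s := by
    rw [hs_def, mem_ball_iff_norm]
    have : ξ - w - (-w) = ξ := by abel
    rw [this]
    linarith
  have := hs.norm_image_sub_le_of_norm_fderiv_le
    (fun y hy => (hder y hy).differentiableAt) hDnorm hmem1 hmem2
  have heq : ξ - w - (0 - w) = ξ := by abel
  rw [heq] at this
  exact this

lemma gradient_continuousOn {N : ℕ} {C₀ : ℝ} {K : EuclideanSpace ℝ (Fin N) → ℝ}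
    (hK : KernelCond N C₀ K) :
    ContinuousOn (gradient K) {(0 : EuclideanSpace ℝ (Fin N))}ᶜ := by
  have h := hK.1.continuousOn_fderiv_of_isOpen isOpen_compl_singleton
    (by norm_num : (1:WithTop ℕ∞) ≤ 2)
  exact (InnerProductSpace.toDual ℝ
    (EuclideanSpace ℝ (Fin N))).symm.continuous.comp_continuousOn h

/-- Case 1 of the claim in the proof of Theorem B: for a kernel `K` satisfying the kernel
condition and a `C¹` vector field `ψ` supported in the closed unit ball with zero
integral (`ψ_R(z) = R^{-N} ψ(z/R)`), there is `C = C(N, C₀, ψ)` such that for all `R > 0`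
and all `w` with `|w| > 2R`, `|∫ ∇K(ξ−w)·ψ_R(ξ) dξ| ≤ C · R · |w|^{-(N+1)}`. -/
theorem adjoint_action_far_field_estimate
    (N : ℕ) (hN : 2 ≤ N) (C₀ : ℝ)
    (K : EuclideanSpace ℝ (Fin N) → ℝ) (hK : KernelCond N C₀ K)
    (ψ : EuclideanSpace ℝ (Fin N) → EuclideanSpace ℝ (Fin N))
    (hψC1 : ContDiff ℝ 1 ψ) (hψsupp : tsupport ψ ⊆ closedBall 0 1)
    (hψint : (∫ z, ψ z) = 0) :
    ∃ C : ℝ, 0 < C ∧ ∀ R : ℝ, 0 < R → ∀ w : EuclideanSpace ℝ (Fin N), 2 * R < ‖w‖ →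
      |∫ ξ, ∑ i, gradient K (ξ - w) i * ((R ^ N)⁻¹ • ψ (R⁻¹ • ξ)) i| ≤
        C * R * ‖w‖ ^ (-(N + 1 : ℝ)) := by
  have hC₀ : 0 ≤ C₀ := kc_C₀_nonneg hN hK
  set Cψ : ℝ := ∫ z, ‖ψ z‖ with hCψ
  have hCψ0 : 0 ≤ Cψ := integral_nonneg fun z => norm_nonneg _
  have h2pow : (0:ℝ) < 2 ^ ((N:ℝ) + 1) := Real.rpow_pos_of_pos (by norm_num) _
  refine ⟨C₀ * 2 ^ ((N:ℝ) + 1) * Cψ + 1, by positivity, ?_⟩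
  intro R hR w hw
  have hw0 : 0 < ‖w‖ := lt_trans (by positivity) hw
  set M : ℝ := C₀ * 2 ^ ((N : ℝ) + 1) * ‖w‖ ^ (-((N : ℝ) + 1)) with hM
  have hM0 : 0 ≤ M := by positivity
  have hRN : (0:ℝ) < R ^ N := by positivity
  set ψR : EuclideanSpace ℝ (Fin N) → EuclideanSpace ℝ (Fin N) :=
    fun ξ => (R ^ N : ℝ)⁻¹ • ψ (R⁻¹ • ξ) with hψRdef
  -- support of ψR
  have hψRzero : ∀ ξ : EuclideanSpace ℝ (Fin N), R < ‖ξ‖ → ψR ξ = 0 := by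
    intro ξ hξ
    have h1 : ψ (R⁻¹ • ξ) = 0 := by
      apply image_eq_zero_of_notMem_tsupport
      intro hmem
      have := hψsupp hmem
      rw [mem_closedBall_zero_iff] at this
      rw [norm_smul, norm_inv, Real.norm_eq_abs, abs_of_pos hR] at this
      have : ‖ξ‖ ≤ R := by
        calc ‖ξ‖ = R * (R⁻¹ * ‖ξ‖) := by field_simp
        _ ≤ R * 1 := by
          apply mul_le_mul_of_nonneg_left this hR.le
        _ = R := mul_one R
      linarith
    rw [hψRdef]; simp [h1]
  have hψRcont : Continuous ψR :=
    (hψC1.continuous.comp (continuous_const_smul R⁻¹)).const_smul ((R ^ N : ℝ)⁻¹)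
  have hψRcs : HasCompactSupport ψR := by
    apply HasCompactSupport.intro (isCompact_closedBall (0:EuclideanSpace ℝ (Fin N)) R)
    intro ξ hξ
    exact hψRzero ξ (by rwa [mem_closedBall_zero_iff, not_le] at hξ)
  have hψRint : Integrable ψR := hψRcont.integrable_of_hasCompactSupport hψRcs
  have hfinrank : Module.finrank ℝ (EuclideanSpace ℝ (Fin N)) = N := by
    simp [finrank_euclideanSpace]
  -- ∫ ψR = 0
  have hintψR : (∫ ξ, ψR ξ) = 0 := by
    rw [hψRdef]
    rw [integral_smul]
    rw [MeasureTheory.Measure.integral_comp_inv_smul_of_nonneg volume ψ hR.le]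
    rw [hfinrank, hψint, smul_zero, smul_zero]
  -- ∫ ‖ψR‖ = Cψ
  have hintnorm : (∫ ξ, ‖ψR ξ‖) = Cψ := by
    have h1 : ∀ ξ, ‖ψR ξ‖ = (R ^ N : ℝ)⁻¹ * ‖ψ (R⁻¹ • ξ)‖ := fun ξ => by
      rw [hψRdef]
      rw [norm_smul, norm_inv, Real.norm_eq_abs, abs_of_pos hRN]
    simp_rw [h1]
    rw [integral_const_mul]
    rw [MeasureTheory.Measure.integral_comp_inv_smul_of_nonneg volume
      (fun z => ‖ψ z‖) hR.le, hfinrank]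
    rw [smul_eq_mul, ← mul_assoc, inv_mul_cancel₀ hRN.ne', one_mul]
  -- the integrand
  set g₀ : EuclideanSpace ℝ (Fin N) := gradient K (0 - w) with hg₀
  set f : EuclideanSpace ℝ (Fin N) → ℝ := fun ξ => ⟪gradient K (ξ - w), ψR ξ⟫ with hf
  set h2 : EuclideanSpace ℝ (Fin N) → ℝ := fun ξ => ⟪g₀, ψR ξ⟫ with hh2
  have hfsum : ∀ ξ, (∑ i, gradient K (ξ - w) i * ψR ξ i) = f ξ := by
    intro ξ
    exact inner_sum_eq _ _
  -- continuity of f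
  have hfcont : Continuous f := by
    rw [continuous_iff_continuousAt]
    intro x
    by_cases hx : x = w
    · -- near w, ψR vanishes
      have hev : f =ᶠ[nhds x] fun _ => (0:ℝ) := by
        have hopen : IsOpen {ξ : EuclideanSpace ℝ (Fin N) | R < ‖ξ‖} :=
          isOpen_lt continuous_const continuous_norm
        have hxmem : x ∈ {ξ : EuclideanSpace ℝ (Fin N) | R < ‖ξ‖} := by
          rw [hx]; simp only [Set.mem_setOf_eq]; linarith
        filter_upwards [hopen.mem_nhds hxmem] with ξ hξ
        rw [hf]; simp only
        rw [hψRzero ξ hξ, inner_zero_right]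
      exact ContinuousAt.congr continuousAt_const hev.symm
    · have hsub : x - w ≠ 0 := sub_ne_zero.2 hx
      have hgc : ContinuousAt (fun ξ : EuclideanSpace ℝ (Fin N) => gradient K (ξ - w)) x := by
        have hmem : x - w ∈ ({(0:EuclideanSpace ℝ (Fin N))}ᶜ : Set _) := hsub
        have h1 : ContinuousAt (gradient K) (x - w) :=
          (gradient_continuousOn hK).continuousAt (isOpen_compl_singleton.mem_nhds hmem)
        have h2c : ContinuousAt (fun ξ : EuclideanSpace ℝ (Fin N) => ξ - w) x :=
          (continuous_id.sub continuous_const).continuousAt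
        exact ContinuousAt.comp (g := gradient K)
          (f := fun ξ : EuclideanSpace ℝ (Fin N) => ξ - w) h1 h2c
      exact hgc.inner hψRcont.continuousAt
  have hfcs : HasCompactSupport f := by
    apply HasCompactSupport.intro (isCompact_closedBall (0:EuclideanSpace ℝ (Fin N)) R)
    intro ξ hξ
    rw [hf]; simp only
    rw [hψRzero ξ (by rwa [mem_closedBall_zero_iff, not_le] at hξ), inner_zero_right]
  have hfint : Integrable f := hfcont.integrable_of_hasCompactSupport hfcs
  have hh2cont : Continuous h2 := continuous_const.inner hψRcont
  have hh2cs : HasCompactSupport h2 := by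
    apply HasCompactSupport.intro (isCompact_closedBall (0:EuclideanSpace ℝ (Fin N)) R)
    intro ξ hξ
    rw [hh2]; simp only
    rw [hψRzero ξ (by rwa [mem_closedBall_zero_iff, not_le] at hξ), inner_zero_right]
  have hh2int : Integrable h2 := hh2cont.integrable_of_hasCompactSupport hh2cs
  have hh2zero : (∫ ξ, h2 ξ) = 0 := by
    rw [hh2]
    simp only
    rw [integral_inner hψRint g₀, hintψR, inner_zero_right]
  -- split
  have hsplit : (∫ ξ, f ξ) = ∫ ξ, (f ξ - h2 ξ) := by
    rw [integral_sub hfint hh2int, hh2zero, sub_zero]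
  -- bound
  have hbound : ‖∫ ξ, (f ξ - h2 ξ)‖ ≤ M * R * Cψ := by
    have hble : ∀ ξ, ‖f ξ - h2 ξ‖ ≤ (M * R) * ‖ψR ξ‖ := by
      intro ξ
      have heq : f ξ - h2 ξ = ⟪gradient K (ξ - w) - g₀, ψR ξ⟫ := by
        rw [hf, hh2]; simp only
        rw [inner_sub_left]
      rw [heq]
      by_cases hξR : ‖ξ‖ ≤ R
      · calc ‖(⟪gradient K (ξ - w) - g₀, ψR ξ⟫ : ℝ)‖
            ≤ ‖gradient K (ξ - w) - g₀‖ * ‖ψR ξ‖ := norm_inner_le_norm _ _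
          _ ≤ (M * R) * ‖ψR ξ‖ := by
              apply mul_le_mul_of_nonneg_right _ (norm_nonneg _)
              calc ‖gradient K (ξ - w) - g₀‖ ≤ M * ‖ξ‖ :=
                    grad_diff_bound hK hC₀ hR hw hξR
                _ ≤ M * R := mul_le_mul_of_nonneg_left hξR hM0
      · rw [hψRzero ξ (not_le.1 hξR), inner_zero_right, norm_zero, norm_zero, mul_zero]
    calc ‖∫ ξ, (f ξ - h2 ξ)‖ ≤ ∫ ξ, (M * R) * ‖ψR ξ‖ :=
          norm_integral_le_of_norm_le (hψRint.norm.const_mul _)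
            (Filter.Eventually.of_forall hble)
      _ = (M * R) * Cψ := by rw [integral_const_mul, hintnorm]
      _ = M * R * Cψ := rfl
  -- finish
  have hgoal : |∫ ξ, ∑ i, gradient K (ξ - w) i * ((R ^ N)⁻¹ • ψ (R⁻¹ • ξ)) i| ≤ M * R * Cψ := by
    have : (∫ ξ, ∑ i, gradient K (ξ - w) i * ((R ^ N)⁻¹ • ψ (R⁻¹ • ξ)) i) = ∫ ξ, f ξ := by
      exact integral_congr_ae (Filter.Eventually.of_forall hfsum)
    rw [this, hsplit, ← Real.norm_eq_abs]
    exact hbound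
  have hexp : (-(N + 1 : ℝ)) = -((N:ℝ) + 1) := by norm_num
  rw [hexp]
  refine le_trans hgoal ?_
  have ht : (0:ℝ) ≤ ‖w‖ ^ (-((N:ℝ)+1)) := Real.rpow_nonneg hw0.le _
  have h1 : M * R * Cψ = (C₀ * 2 ^ ((N:ℝ)+1) * Cψ) * R * ‖w‖ ^ (-((N:ℝ)+1)) := by
    rw [hM]; ring
  rw [h1]
  have h2' : (0:ℝ) ≤ R * ‖w‖ ^ (-((N:ℝ)+1)) := mul_nonneg hR.le ht
  nlinarith [mul_nonneg hR.le ht]
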